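/- The generalized Weyl algebra 𝒜 = K[h][X, Y; σ^m, a] with σ(h) = h-1 and a = (h+m-1)(h-2)(h-3)⋯(h-m) is a simple ring. -/

import Mathlib

open Polynomial

/-- The defining element `a = (h+m-1)(h-2)(h-3)⋯(h-m)`. -/
noncomputable def aPoly (K : Type*) [Field K] (m : ℕ) : Polynomial K :=
  (X + C ((m : K) - 1)) * ∏ j ∈ Finset.Icc 2 m, (X - C (j : K))

/-- Defining relations of the generalized Weyl algebra
`𝒜 = K[h][X,Y;σ^m,a]`, `σ(h) = h-1`, `a = (h+m-1)(h-2)⋯(h-m)`: generators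
`h` (index 0), `X` (index 1), `Y` (index 2) with `Xh = (h-m)X`, `Yh = (h+m)Y`,
`YX = a`, `XY = σ^m(a) = a(h-m)`. -/
inductive gwaRel2 (K : Type*) [Field K] (m : ℕ) :
    FreeAlgebra K (Fin 3) → FreeAlgebra K (Fin 3) → Prop
  | xh : gwaRel2 K m (FreeAlgebra.ι K 1 * FreeAlgebra.ι K 0)
      ((FreeAlgebra.ι K 0 - algebraMap K _ (m : K)) * FreeAlgebra.ι K 1)
  | yh : gwaRel2 K m (FreeAlgebra.ι K 2 * FreeAlgebra.ι K 0)
      ((FreeAlgebra.ι K 0 + algebraMap K _ (m : K)) * FreeAlgebra.ι K 2)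
  | yx : gwaRel2 K m (FreeAlgebra.ι K 2 * FreeAlgebra.ι K 1)
      (aeval (FreeAlgebra.ι K 0) (aPoly K m))
  | xy : gwaRel2 K m (FreeAlgebra.ι K 1 * FreeAlgebra.ι K 2)
      (aeval (FreeAlgebra.ι K 0) ((aPoly K m).comp (X - C (m : K))))

/-- The generalized Weyl algebra `𝒜 = K[h][X,Y;σ^m, (h+m-1)(h-2)⋯(h-m)]`. -/
abbrev GWA2 (K : Type*) [Field K] (m : ℕ) := RingQuot (gwaRel2 K m)

namespace GWAaux
variable (K : Type*) [Field K] (m : ℕ)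
noncomputable def τ : Polynomial K →ₐ[K] Polynomial K := aeval (X - C (m : K))
noncomputable def τi : Polynomial K →ₐ[K] Polynomial K := aeval (X + C (m : K))
variable {K m}
lemma τi_τ (p : Polynomial K) : τi K m (τ K m p) = p := by
  simp [τ, τi, ← Polynomial.comp_eq_aeval, Polynomial.comp_assoc]
lemma τ_τi (p : Polynomial K) : τ K m (τi K m p) = p := by
  simp [τ, τi, ← Polynomial.comp_eq_aeval, Polynomial.comp_assoc]

lemma aPoly_ne_zero : aPoly K m ≠ 0 := by
  apply mul_ne_zero
  · exact X_add_C_ne_zero _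
  · exact Finset.prod_ne_zero_iff.2 fun j _ => X_sub_C_ne_zero _
variable (K m)

/-- The model module `⊕_{n ∈ ℤ} K[h] eₙ`. -/
abbrev M := ℤ →₀ Polynomial K

/-- cocycle for X. -/
noncomputable def cX (n : ℤ) : Polynomial K := if 0 ≤ n then 1 else τ K m (aPoly K m)
/-- cocycle for Y. -/
noncomputable def cY (n : ℤ) : Polynomial K := if n ≤ 0 then 1 else aPoly K m

/-- action of h. -/
noncomputable def Hop : Module.End K (M K) :=
  Finsupp.lsum K fun n => Finsupp.lsingle n ∘ₗ LinearMap.mulLeft K (X : Polynomial K)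
/-- action of X. -/
noncomputable def Xop : Module.End K (M K) :=
  Finsupp.lsum K fun n => Finsupp.lsingle (n + 1) ∘ₗ LinearMap.mulLeft K (cX K m n) ∘ₗ (τ K m).toLinearMap
/-- action of Y. -/
noncomputable def Yop : Module.End K (M K) :=
  Finsupp.lsum K fun n => Finsupp.lsingle (n - 1) ∘ₗ LinearMap.mulLeft K (cY K m n) ∘ₗ (τi K m).toLinearMap

variable {K m}

@[simp] lemma Hop_single (n : ℤ) (p : Polynomial K) :
    Hop K (Finsupp.single n p) = Finsupp.single n (X * p) := by
  simp only [Hop, Finsupp.lsum_single, LinearMap.coe_comp, Function.comp_apply,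
    LinearMap.mulLeft_apply, Finsupp.lsingle_apply]
@[simp] lemma Xop_single (n : ℤ) (p : Polynomial K) :
    Xop K m (Finsupp.single n p) = Finsupp.single (n + 1) (cX K m n * τ K m p) := by
  simp only [Xop, Finsupp.lsum_single, LinearMap.coe_comp, Function.comp_apply,
    AlgHom.toLinearMap_apply, LinearMap.mulLeft_apply, Finsupp.lsingle_apply]
@[simp] lemma Yop_single (n : ℤ) (p : Polynomial K) :
    Yop K m (Finsupp.single n p) = Finsupp.single (n - 1) (cY K m n * τi K m p) := by
  simp only [Yop, Finsupp.lsum_single, LinearMap.coe_comp, Function.comp_apply,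
    AlgHom.toLinearMap_apply, LinearMap.mulLeft_apply, Finsupp.lsingle_apply]

lemma endext {f g : Module.End K (M K)} (h : ∀ n p, f (Finsupp.single n p) = g (Finsupp.single n p)) :
    f = g := by
  refine Finsupp.lhom_ext fun n p => h n p

lemma τ_X : τ K m (X : Polynomial K) = X - C (m : K) := by simp [τ]
lemma τi_X : τi K m (X : Polynomial K) = X + C (m : K) := by simp [τi]

lemma rel_xh_model : Xop K m * Hop K = (Hop K - algebraMap K _ (m : K)) * Xop K m := by
  apply endext; intro n p
  simp only [Module.End.mul_apply, Hop_single, Xop_single, LinearMap.sub_apply,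
    Module.algebraMap_end_apply, Finsupp.smul_single, map_mul, τ_X,
    Polynomial.smul_eq_C_mul, ← Finsupp.single_sub]
  congr 1
  ring

lemma rel_yh_model : Yop K m * Hop K = (Hop K + algebraMap K _ (m : K)) * Yop K m := by
  apply endext; intro n p
  simp only [Module.End.mul_apply, Hop_single, Yop_single, LinearMap.add_apply,
    Module.algebraMap_end_apply, Finsupp.smul_single, map_mul, τi_X,
    Polynomial.smul_eq_C_mul, ← Finsupp.single_add]
  congr 1
  ring

lemma aeval_Hop_single (q : Polynomial K) (n : ℤ) (p : Polynomial K) :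
    aeval (Hop K) q (Finsupp.single n p) = Finsupp.single n (q * p) := by
  induction q using Polynomial.induction_on generalizing p with
  | C c =>
      simp only [aeval_C, Module.algebraMap_end_apply, Finsupp.smul_single,
        Polynomial.smul_eq_C_mul]
  | add q r hq hr =>
      simp only [map_add, LinearMap.add_apply, hq, hr, ← Finsupp.single_add, add_mul]
  | monomial k c hk =>
      have : (C c * X ^ (k + 1)) = (C c * X ^ k) * X := by ring
      rw [this, map_mul, Module.End.mul_apply, aeval_X, Hop_single, hk]
      congr 1
      ring

lemma rel_yx_model : Yop K m * Xop K m = aeval (Hop K) (aPoly K m) := by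
  apply endext; intro n p
  rw [Module.End.mul_apply, Xop_single, Yop_single, aeval_Hop_single, map_mul, τi_τ]
  by_cases hn : 0 ≤ n
  · have h1 : cX K m n = 1 := if_pos hn
    have h2 : cY K m (n + 1) = aPoly K m := if_neg (by omega)
    rw [h1, h2, map_one, one_mul]
    congr 1
    omega
  · have h1 : cX K m n = τ K m (aPoly K m) := if_neg hn
    have h2 : cY K m (n + 1) = 1 := if_pos (by omega)
    rw [h1, h2, one_mul, τi_τ]
    congr 1
    omega

lemma rel_xy_model : Xop K m * Yop K m = aeval (Hop K) ((aPoly K m).comp (X - C (m : K))) := by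
  apply endext; intro n p
  rw [Module.End.mul_apply, Yop_single, Xop_single, aeval_Hop_single, map_mul, τ_τi]
  have hτ : (aPoly K m).comp (X - C (m : K)) = τ K m (aPoly K m) := rfl
  by_cases hn : n ≤ 0
  · have h1 : cY K m n = 1 := if_pos hn
    have h2 : cX K m (n - 1) = τ K m (aPoly K m) := if_neg (by omega)
    rw [h1, h2, map_one, one_mul, hτ]
    congr 1
    omega
  · have h1 : cY K m n = aPoly K m := if_neg hn
    have h2 : cX K m (n - 1) = 1 := if_pos (by omega)
    rw [h1, h2, one_mul, hτ]
    congr 1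
    omega

variable (K m)

/-- The free algebra map to the model. -/
noncomputable def freeMap : FreeAlgebra K (Fin 3) →ₐ[K] Module.End K (M K) :=
  FreeAlgebra.lift K ![Hop K, Xop K m, Yop K m]

@[simp] lemma freeMap_ι0 : freeMap K m (FreeAlgebra.ι K 0) = Hop K := by
  simp [freeMap]
@[simp] lemma freeMap_ι1 : freeMap K m (FreeAlgebra.ι K 1) = Xop K m := by
  simp [freeMap]
@[simp] lemma freeMap_ι2 : freeMap K m (FreeAlgebra.ι K 2) = Yop K m := by
  simp [freeMap]

lemma freeMap_rel : ∀ ⦃x y⦄, gwaRel2 K m x y → freeMap K m x = freeMap K m y := by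
  intro x y h
  induction h with
  | xh =>
      rw [map_mul, map_mul, map_sub, AlgHom.commutes, freeMap_ι0, freeMap_ι1]
      exact rel_xh_model
  | yh =>
      rw [map_mul, map_mul, map_add, AlgHom.commutes, freeMap_ι0, freeMap_ι2]
      exact rel_yh_model
  | yx =>
      rw [map_mul, ← Polynomial.aeval_algHom_apply, freeMap_ι0, freeMap_ι1, freeMap_ι2]
      exact rel_yx_model
  | xy =>
      rw [map_mul, ← Polynomial.aeval_algHom_apply, freeMap_ι0, freeMap_ι1, freeMap_ι2]
      exact rel_xy_model

/-- The representation of the GWA on the model. -/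
noncomputable def ρ : GWA2 K m →ₐ[K] Module.End K (M K) :=
  RingQuot.liftAlgHom K ⟨freeMap K m, freeMap_rel K m⟩

/-- generator h. -/
noncomputable def Hg : GWA2 K m := RingQuot.mkAlgHom K (gwaRel2 K m) (FreeAlgebra.ι K 0)
/-- generator X. -/
noncomputable def Xg : GWA2 K m := RingQuot.mkAlgHom K (gwaRel2 K m) (FreeAlgebra.ι K 1)
/-- generator Y. -/
noncomputable def Yg : GWA2 K m := RingQuot.mkAlgHom K (gwaRel2 K m) (FreeAlgebra.ι K 2)

@[simp] lemma ρ_Hg : ρ K m (Hg K m) = Hop K := by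
  simp [ρ, Hg, RingQuot.liftAlgHom_mkAlgHom_apply]
@[simp] lemma ρ_Xg : ρ K m (Xg K m) = Xop K m := by
  simp [ρ, Xg, RingQuot.liftAlgHom_mkAlgHom_apply]
@[simp] lemma ρ_Yg : ρ K m (Yg K m) = Yop K m := by
  simp [ρ, Yg, RingQuot.liftAlgHom_mkAlgHom_apply]

lemma rel_xh : Xg K m * Hg K m = (Hg K m - algebraMap K _ (m : K)) * Xg K m := by
  have := RingQuot.mkAlgHom_rel K (gwaRel2.xh (K := K) (m := m))
  simpa [Hg, Xg, map_mul, map_sub, AlgHom.commutes] using this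

lemma rel_yh : Yg K m * Hg K m = (Hg K m + algebraMap K _ (m : K)) * Yg K m := by
  have := RingQuot.mkAlgHom_rel K (gwaRel2.yh (K := K) (m := m))
  simpa [Hg, Yg, map_mul, map_add, AlgHom.commutes] using this

lemma rel_yx : Yg K m * Xg K m = aeval (Hg K m) (aPoly K m) := by
  have := RingQuot.mkAlgHom_rel K (gwaRel2.yx (K := K) (m := m))
  simpa [Hg, Xg, Yg, map_mul, ← Polynomial.aeval_algHom_apply] using this

lemma rel_xy : Xg K m * Yg K m = aeval (Hg K m) (τ K m (aPoly K m)) := by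
  have := RingQuot.mkAlgHom_rel K (gwaRel2.xy (K := K) (m := m))
  have hτ : (aPoly K m).comp (X - C (m : K)) = τ K m (aPoly K m) := rfl
  rw [← hτ]
  simpa [Hg, Xg, Yg, map_mul, ← Polynomial.aeval_algHom_apply] using this

/-- `v n = Xⁿ` for `n ≥ 0`, `Y^(-n)` for `n < 0`. -/
noncomputable def v (n : ℤ) : GWA2 K m :=
  if 0 ≤ n then Xg K m ^ n.toNat else Yg K m ^ (-n).toNat

variable {K m}

lemma aeval_Hg_X : aeval (Hg K m) (X : Polynomial K) = Hg K m := by simp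

lemma X_comm (p : Polynomial K) :
    Xg K m * aeval (Hg K m) p = aeval (Hg K m) (τ K m p) * Xg K m := by
  induction p using Polynomial.induction_on with
  | C c => simp [τ, Algebra.commutes]
  | add p q hp hq => simp [map_add, mul_add, add_mul, hp, hq]
  | monomial k c hk =>
      have h1 : (C c * X ^ (k + 1) : Polynomial K) = (C c * X ^ k) * X := by ring
      have h2 : (aeval (Hg K m)) (τ K m (C c * X ^ k * X)) =
          (aeval (Hg K m)) (τ K m (C c * X ^ k)) * (Hg K m - algebraMap K _ (m : K)) := by
        rw [map_mul, τ_X]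
        rw [map_mul, map_sub, aeval_Hg_X, aeval_C]
      rw [h1, h2, map_mul, aeval_Hg_X, ← mul_assoc, hk, mul_assoc, rel_xh, ← mul_assoc]

lemma Y_comm (p : Polynomial K) :
    Yg K m * aeval (Hg K m) p = aeval (Hg K m) (τi K m p) * Yg K m := by
  induction p using Polynomial.induction_on with
  | C c => simp [τi, Algebra.commutes]
  | add p q hp hq => simp [map_add, mul_add, add_mul, hp, hq]
  | monomial k c hk =>
      have h1 : (C c * X ^ (k + 1) : Polynomial K) = (C c * X ^ k) * X := by ring
      have h2 : (aeval (Hg K m)) (τi K m (C c * X ^ k * X)) =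
          (aeval (Hg K m)) (τi K m (C c * X ^ k)) * (Hg K m + algebraMap K _ (m : K)) := by
        rw [map_mul, τi_X]
        rw [map_mul, map_add, aeval_Hg_X, aeval_C]
      rw [h1, h2, map_mul, aeval_Hg_X, ← mul_assoc, hk, mul_assoc, rel_yh, ← mul_assoc]

lemma Xpow_comm (k : ℕ) (p : Polynomial K) :
    Xg K m ^ k * aeval (Hg K m) p = aeval (Hg K m) ((τ K m)^[k] p) * Xg K m ^ k := by
  induction k generalizing p with
  | zero => simp
  | succ k ih =>
      rw [pow_succ', mul_assoc, ih, ← mul_assoc, X_comm, mul_assoc, ← pow_succ',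
        Function.iterate_succ_apply']

lemma Ypow_comm (k : ℕ) (p : Polynomial K) :
    Yg K m ^ k * aeval (Hg K m) p = aeval (Hg K m) ((τi K m)^[k] p) * Yg K m ^ k := by
  induction k generalizing p with
  | zero => simp
  | succ k ih =>
      rw [pow_succ', mul_assoc, ih, ← mul_assoc, Y_comm, mul_assoc, ← pow_succ',
        Function.iterate_succ_apply']

variable (K m)

/-- The normal form map: `d ↦ Σ dₙ(h) vₙ`. -/
noncomputable def Ψ : M K →ₗ[K] GWA2 K m :=
  Finsupp.lsum K fun n =>
    (LinearMap.mulRight K (v K m n)) ∘ₗ (aeval (Hg K m) : Polynomial K →ₐ[K] GWA2 K m).toLinearMap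

variable {K m}

@[simp] lemma Ψ_single (n : ℤ) (p : Polynomial K) :
    Ψ K m (Finsupp.single n p) = aeval (Hg K m) p * v K m n := by
  simp only [Ψ, Finsupp.lsum_single, LinearMap.coe_comp, Function.comp_apply,
    AlgHom.toLinearMap_apply, LinearMap.mulRight_apply]

variable (K m)

/-- The coordinates map. -/
noncomputable def Φ : GWA2 K m →ₗ[K] M K where
  toFun x := ρ K m x (Finsupp.single 0 1)
  map_add' x y := by simp [map_add]
  map_smul' c x := by simp [map_smul]

variable {K m}

lemma Φ_apply (x : GWA2 K m) : Φ K m x = ρ K m x (Finsupp.single 0 1) := rfl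

lemma ρ_v_single0 (n : ℤ) : ρ K m (v K m n) (Finsupp.single 0 1) = Finsupp.single n 1 := by
  have hX : ∀ k : ℕ, (Xop K m ^ k) (Finsupp.single 0 1) = Finsupp.single (k : ℤ) 1 := by
    intro k
    induction k with
    | zero => simp
    | succ k ih =>
        rw [pow_succ', Module.End.mul_apply, ih, Xop_single]
        have : cX K m (k : ℤ) = 1 := if_pos (by positivity)
        simp [this]
  have hY : ∀ k : ℕ, (Yop K m ^ k) (Finsupp.single 0 1) = Finsupp.single (-(k : ℤ)) 1 := by
    intro k
    induction k with
    | zero => simp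
    | succ k ih =>
        rw [pow_succ', Module.End.mul_apply, ih, Yop_single]
        have : cY K m (-(k : ℤ)) = 1 := if_pos (by omega)
        simp only [this, map_one, mul_one]
        congr 1
        omega
  by_cases hn : 0 ≤ n
  · rw [v, if_pos hn, map_pow, ρ_Xg, hX]
    congr 1
    omega
  · rw [v, if_neg hn, map_pow, ρ_Yg, hY]
    congr 1
    omega

lemma ΦΨ (d : M K) : Φ K m (Ψ K m d) = d := by
  suffices h : (Φ K m) ∘ₗ (Ψ K m) = LinearMap.id by
    have := LinearMap.congr_fun h d
    simpa using this
  apply Finsupp.lhom_ext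
  intro n p
  rw [LinearMap.comp_apply, Ψ_single, LinearMap.id_apply, Φ_apply, map_mul,
    Module.End.mul_apply, ρ_v_single0, ← Polynomial.aeval_algHom_apply, ρ_Hg,
    aeval_Hop_single, mul_one]

lemma v_zero : v K m 0 = 1 := by simp [v]

lemma v_nonneg {n : ℤ} (hn : 0 ≤ n) : v K m n = Xg K m ^ n.toNat := if_pos hn

lemma v_nonpos {n : ℤ} (hn : n ≤ 0) : v K m n = Yg K m ^ (-n).toNat := by
  by_cases h0 : n = 0
  · subst h0; simp [v]
  · rw [v, if_neg (by omega)]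

lemma τpow_eq (k : ℕ) (p : Polynomial K) : ∃ q, (τ K m)^[k] p = q := ⟨_, rfl⟩

/-- right multiplication closure of basis elements by `Hg`. -/
lemma basis_mul_Hg (n : ℤ) (p : Polynomial K) :
    ∃ (n' : ℤ) (p' : Polynomial K), (aeval (Hg K m) p * v K m n) * Hg K m = aeval (Hg K m) p' * v K m n' := by
  by_cases hn : 0 ≤ n
  · refine ⟨n, p * (τ K m)^[n.toNat] X, ?_⟩
    rw [v, if_pos hn, mul_assoc, ← aeval_Hg_X (K := K) (m := m), Xpow_comm, map_mul, mul_assoc]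
    rw [aeval_Hg_X]
  · refine ⟨n, p * (τi K m)^[(-n).toNat] X, ?_⟩
    rw [v, if_neg hn, mul_assoc, ← aeval_Hg_X (K := K) (m := m), Ypow_comm, map_mul, mul_assoc]
    rw [aeval_Hg_X]

/-- right multiplication closure of basis elements by `Xg`. -/
lemma basis_mul_Xg (n : ℤ) (p : Polynomial K) :
    ∃ (n' : ℤ) (p' : Polynomial K), (aeval (Hg K m) p * v K m n) * Xg K m = aeval (Hg K m) p' * v K m n' := by
  by_cases hn : 0 ≤ n
  · refine ⟨n + 1, p, ?_⟩
    have he : (n + 1).toNat = n.toNat + 1 := by omega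
    rw [v_nonneg hn, v_nonneg (by omega : (0:ℤ) ≤ n + 1), he, mul_assoc, ← pow_succ]
  · refine ⟨n + 1, p * (τi K m)^[(-(n+1)).toNat] (aPoly K m), ?_⟩
    have hk : (-n).toNat = (-(n+1)).toNat + 1 := by omega
    rw [v_nonpos (by omega : n ≤ 0), v_nonpos (by omega : n + 1 ≤ 0), hk, pow_succ, mul_assoc,
      mul_assoc, rel_yx, Ypow_comm, map_mul, mul_assoc]

/-- right multiplication closure of basis elements by `Yg`. -/
lemma basis_mul_Yg (n : ℤ) (p : Polynomial K) :
    ∃ (n' : ℤ) (p' : Polynomial K), (aeval (Hg K m) p * v K m n) * Yg K m = aeval (Hg K m) p' * v K m n' := by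
  by_cases hn : 0 < n
  · refine ⟨n - 1, p * (τ K m)^[(n-1).toNat] (τ K m (aPoly K m)), ?_⟩
    have hk : n.toNat = (n - 1).toNat + 1 := by omega
    rw [v_nonneg (by omega : (0:ℤ) ≤ n), v_nonneg (by omega : (0:ℤ) ≤ n - 1), hk, pow_succ,
      mul_assoc, mul_assoc, rel_xy, Xpow_comm, map_mul, mul_assoc]
  · refine ⟨n - 1, p, ?_⟩
    have he : (-(n - 1)).toNat = (-n).toNat + 1 := by omega
    rw [v_nonpos (by omega : n ≤ 0), v_nonpos (by omega : n - 1 ≤ 0), he, mul_assoc, ← pow_succ]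

lemma range_mul_gen {g : GWA2 K m}
    (hg : ∀ (n : ℤ) (p : Polynomial K), ∃ (n' : ℤ) (p' : Polynomial K),
      (aeval (Hg K m) p * v K m n) * g = aeval (Hg K m) p' * v K m n') :
    ∀ s ∈ LinearMap.range (Ψ K m), s * g ∈ LinearMap.range (Ψ K m) := by
  rintro s ⟨d, rfl⟩
  induction d using Finsupp.induction with
  | zero => simp only [map_zero, zero_mul]; exact Submodule.zero_mem _
  | single_add n p d hnd hp ih =>
      rw [map_add, add_mul]
      refine Submodule.add_mem _ ?_ ih
      rw [Ψ_single]
      obtain ⟨n', p', h⟩ := hg n p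
      rw [h]
      exact ⟨Finsupp.single n' p', by rw [Ψ_single]⟩

lemma range_Ψ_mul_mem : ∀ (y : GWA2 K m), ∀ s ∈ LinearMap.range (Ψ K m),
    s * y ∈ LinearMap.range (Ψ K m) := by
  intro y
  obtain ⟨z, rfl⟩ := RingQuot.mkAlgHom_surjective K (gwaRel2 K m) y
  induction z with
  | grade0 r =>
      intro s hs
      rw [AlgHom.commutes, ← Algebra.commutes, ← Algebra.smul_def]
      exact Submodule.smul_mem _ _ hs
  | grade1 i =>
      fin_cases i
      · exact range_mul_gen (basis_mul_Hg)
      · exact range_mul_gen (basis_mul_Xg)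
      · exact range_mul_gen (basis_mul_Yg)
  | mul a b ha hb =>
      intro s hs
      rw [map_mul, ← mul_assoc]
      exact hb _ (ha _ hs)
  | add a b ha hb =>
      intro s hs
      rw [map_add, mul_add]
      exact Submodule.add_mem _ (ha _ hs) (hb _ hs)

lemma Ψ_surjective : Function.Surjective (Ψ K m) := by
  intro x
  have h1 : (1 : GWA2 K m) ∈ LinearMap.range (Ψ K m) :=
    ⟨Finsupp.single 0 1, by rw [Ψ_single, v_zero, map_one, one_mul]⟩
  have := range_Ψ_mul_mem x 1 h1
  rw [one_mul] at this
  exact this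

lemma ΨΦ (x : GWA2 K m) : Ψ K m (Φ K m x) = x := by
  obtain ⟨d, rfl⟩ := Ψ_surjective x
  rw [ΦΨ]

lemma Φ_injective : Function.Injective (Φ K m) := by
  intro x y h
  rw [← ΨΦ x, ← ΨΦ y, h]

instance : Nontrivial (GWA2 K m) := by
  refine ⟨1, 0, fun h => ?_⟩
  have : (Φ K m) 1 = (Φ K m) 0 := by rw [h]
  rw [map_zero, Φ_apply, map_one] at this
  simp only [Module.End.one_apply] at this
  exact one_ne_zero (Finsupp.single_eq_zero.mp this)

lemma τ_iter_X (k : ℕ) : (τ K m)^[k] (X : Polynomial K) = X - C ((k * m : ℕ) : K) := by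
  induction k with
  | zero => simp
  | succ k ih =>
      rw [Function.iterate_succ_apply', ih, map_sub, τ_X]
      rw [show (τ K m) (C ((k * m : ℕ) : K)) = C ((k * m : ℕ) : K) by simp [τ]]
      rw [sub_sub, ← C_add]
      push_cast
      ring_nf

lemma τi_iter_X (k : ℕ) : (τi K m)^[k] (X : Polynomial K) = X + C ((k * m : ℕ) : K) := by
  induction k with
  | zero => simp
  | succ k ih =>
      rw [Function.iterate_succ_apply', ih, map_add, τi_X]
      rw [show (τi K m) (C ((k * m : ℕ) : K)) = C ((k * m : ℕ) : K) by simp [τi]]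
      rw [add_assoc, ← C_add]
      push_cast
      ring_nf

lemma v_mul_Hg (n : ℤ) :
    v K m n * Hg K m = (Hg K m - algebraMap K _ ((n : K) * (m : K))) * v K m n := by
  by_cases hn : 0 ≤ n
  · have hc : ((n.toNat * m : ℕ) : K) = (n : K) * (m : K) := by
      have h1 : ((n.toNat : ℕ) : K) = (n : K) := by
        exact_mod_cast congrArg (Int.cast : ℤ → K) (Int.toNat_of_nonneg hn)
      push_cast [h1]
      ring
    rw [v_nonneg hn, ← aeval_Hg_X (K := K) (m := m), Xpow_comm, τ_iter_X, map_sub,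
      aeval_Hg_X, aeval_C, hc]
  · have hc : (((-n).toNat * m : ℕ) : K) = -((n : K) * (m : K)) := by
      have h1 : (((-n).toNat : ℕ) : K) = -(n : K) := by
        have := congrArg (Int.cast : ℤ → K) (Int.toNat_of_nonneg (by omega : (0:ℤ) ≤ -n))
        push_cast at this
        exact_mod_cast this
      push_cast [h1]
      ring
    rw [v_nonpos (by omega : n ≤ 0), ← aeval_Hg_X (K := K) (m := m), Ypow_comm, τi_iter_X,
      map_add, aeval_Hg_X, aeval_C, hc, map_neg, ← sub_eq_add_neg]

variable (K m)

/-- the model version of `x ↦ hx - xh`. -/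
noncomputable def Lmod : M K →ₗ[K] M K :=
  Finsupp.lsum K fun n => Finsupp.lsingle n ∘ₗ LinearMap.mulLeft K (C ((n : K) * (m : K)))

variable {K m}

@[simp] lemma Lmod_single (n : ℤ) (p : Polynomial K) :
    Lmod K m (Finsupp.single n p) = Finsupp.single n (C ((n : K) * (m : K)) * p) := by
  simp only [Lmod, Finsupp.lsum_single, LinearMap.coe_comp, Function.comp_apply,
    LinearMap.mulLeft_apply, Finsupp.lsingle_apply]

lemma Lmod_apply (d : M K) (n : ℤ) :
    Lmod K m d n = C ((n : K) * (m : K)) * d n := by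
  induction d using Finsupp.induction with
  | zero => simp
  | single_add j q d hj hq ih =>
      rw [map_add, Finsupp.add_apply, Finsupp.add_apply, ih, Lmod_single, mul_add]
      congr 1
      rcases eq_or_ne j n with rfl | h
      · rw [Finsupp.single_apply, if_pos rfl, Finsupp.single_apply, if_pos rfl]
      · rw [Finsupp.single_apply, if_neg h, Finsupp.single_apply, if_neg h, mul_zero]

lemma L_basis (n : ℤ) (p : Polynomial K) :
    Hg K m * (aeval (Hg K m) p * v K m n) - (aeval (Hg K m) p * v K m n) * Hg K m
      = aeval (Hg K m) (C ((n : K) * (m : K)) * p) * v K m n := by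
  have h1 : Hg K m * (aeval (Hg K m) p * v K m n)
      = aeval (Hg K m) (X * p) * v K m n := by
    rw [map_mul, aeval_Hg_X, ← mul_assoc]
  have h2 : (aeval (Hg K m) p * v K m n) * Hg K m
      = aeval (Hg K m) (p * X - p * C ((n : K) * (m : K))) * v K m n := by
    rw [map_sub, map_mul, map_mul, aeval_Hg_X, aeval_C, mul_assoc, v_mul_Hg, ← mul_assoc,
      mul_sub]
  rw [h1, h2, ← sub_mul, ← map_sub]
  congr 2
  ring

lemma Φ_L (x : GWA2 K m) :
    Φ K m (Hg K m * x - x * Hg K m) = Lmod K m (Φ K m x) := by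
  have key : ∀ d : M K, Φ K m (Hg K m * Ψ K m d - Ψ K m d * Hg K m) = Lmod K m d := by
    have heq : (Φ K m) ∘ₗ ((LinearMap.mulLeft K (Hg K m) - LinearMap.mulRight K (Hg K m)).comp
        (Ψ K m)) = Lmod K m := by
      apply Finsupp.lhom_ext
      intro n p
      simp only [LinearMap.comp_apply, LinearMap.coe_comp, Function.comp_apply,
        LinearMap.sub_apply, LinearMap.mulLeft_apply, LinearMap.mulRight_apply,
        LinearMap.coe_mk, Ψ_single, Lmod_single]
      rw [L_basis, ← Ψ_single, ΦΨ]
    intro d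
    have := LinearMap.congr_fun heq d
    simpa using this
  have := key (Φ K m x)
  rwa [ΨΦ] at this

section CharZeroPart
variable [CharZero K]

lemma extract_homogeneous (hm : m ≠ 0) (I : TwoSidedIdeal (GWA2 K m)) :
    ∀ (N : ℕ) (x : GWA2 K m), x ∈ I → x ≠ 0 → (Φ K m x).support.card ≤ N →
    ∃ (n : ℤ) (p : Polynomial K), p ≠ 0 ∧ aeval (Hg K m) p * v K m n ∈ I := by
  intro N
  induction N with
  | zero =>
      intro x hxI hx hcard
      exfalso
      apply hx
      have hΦ : Φ K m x = 0 := by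
        rw [← Finsupp.support_eq_empty, ← Finset.card_eq_zero]
        omega
      have := ΨΦ (K := K) (m := m) x
      rw [hΦ, map_zero] at this
      exact this.symm
  | succ N ih =>
      intro x hxI hx hcard
      have hd : Φ K m x ≠ 0 := fun h => hx (by
        have := ΨΦ (K := K) (m := m) x
        rw [h, map_zero] at this
        exact this.symm)
      obtain ⟨n₀, hn₀⟩ := Finsupp.support_nonempty_iff.mpr hd
      by_cases hsub : (Φ K m x).support ⊆ {n₀}
      · refine ⟨n₀, Φ K m x n₀, Finsupp.mem_support_iff.mp hn₀, ?_⟩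
        have hx_eq : x = aeval (Hg K m) (Φ K m x n₀) * v K m n₀ := by
          have hsingle : Φ K m x = Finsupp.single n₀ (Φ K m x n₀) := by
            refine Finsupp.ext fun j => ?_
            rcases eq_or_ne j n₀ with rfl | h
            · rw [Finsupp.single_apply, if_pos rfl]
            · rw [Finsupp.single_apply, if_neg (Ne.symm h)]
              by_contra hj
              exact h (Finset.mem_singleton.mp (hsub (Finsupp.mem_support_iff.mpr hj)))
          conv_lhs => rw [← ΨΦ (K := K) (m := m) x, hsingle, Ψ_single]
        rwa [← hx_eq]
      · obtain ⟨n₁, hn₁mem, hn₁ne⟩ : ∃ n₁ ∈ (Φ K m x).support, n₁ ≠ n₀ := by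
          by_contra hc
          push_neg at hc
          exact hsub fun j hj => Finset.mem_singleton.mpr (hc j hj)
        set x' := Hg K m * x - x * Hg K m - algebraMap K _ ((n₁ : K) * (m : K)) * x with hx'
        have hx'I : x' ∈ I := by
          refine I.sub_mem (I.sub_mem (I.mul_mem_left _ _ hxI) (I.mul_mem_right _ _ hxI))
            (I.mul_mem_left _ _ hxI)
        have hΦx' : ∀ j : ℤ, Φ K m x' j
            = C (((j : K) - (n₁ : K)) * (m : K)) * Φ K m x j := by
          intro j
          rw [hx', map_sub, Φ_L, ← Algebra.smul_def, map_smul, Finsupp.sub_apply,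
            Lmod_apply, Finsupp.smul_apply, Polynomial.smul_eq_C_mul, ← sub_mul, ← C_sub]
          congr 2
          ring
        have hcoef : ∀ j : ℤ, j ≠ n₁ → (((j : K) - (n₁ : K)) * (m : K)) ≠ 0 := by
          intro j hj
          have h1 : ((j : K) - (n₁ : K)) ≠ 0 := by
            rw [sub_ne_zero]
            exact_mod_cast fun h => hj (by exact_mod_cast h)
          exact mul_ne_zero h1 (Nat.cast_ne_zero.mpr hm)
        have hsupp : (Φ K m x').support ⊆ (Φ K m x).support.erase n₁ := by
          intro j hj
          rw [Finsupp.mem_support_iff] at hj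
          rw [hΦx'] at hj
          rcases eq_or_ne j n₁ with rfl | h
          · exfalso; apply hj; simp
          · exact Finset.mem_erase.mpr ⟨h, Finsupp.mem_support_iff.mpr fun h0 => hj (by
              rw [h0, mul_zero])⟩
        have hx'0 : x' ≠ 0 := by
          intro h0
          have : Φ K m x' n₀ = 0 := by rw [h0, map_zero]; rfl
          rw [hΦx'] at this
          rcases mul_eq_zero.mp this with hc | hc
          · exact hcoef n₀ (Ne.symm hn₁ne) (by
              have := C_eq_zero.mp hc
              exact this)
          · exact Finsupp.mem_support_iff.mp hn₀ hc
        have hcard' : (Φ K m x').support.card ≤ N := by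
          have h1 := Finset.card_le_card hsupp
          have h2 : ((Φ K m x).support.erase n₁).card = (Φ K m x).support.card - 1 :=
            Finset.card_erase_of_mem hn₁mem
          have h3 : 1 ≤ (Φ K m x).support.card := Finset.card_pos.mpr ⟨n₁, hn₁mem⟩
          omega
        exact ih x' hx'I hx'0 hcard'

end CharZeroPart

lemma XYpow (k : ℕ) : ∃ w : Polynomial K, w ≠ 0 ∧
    Xg K m ^ k * Yg K m ^ k = aeval (Hg K m) w := by
  induction k with
  | zero => exact ⟨1, one_ne_zero, by simp⟩
  | succ k ih =>
      obtain ⟨w, hw, hweq⟩ := ih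
      refine ⟨τ K m w * τ K m (aPoly K m), ?_, ?_⟩
      · refine mul_ne_zero (fun h => hw ?_) (fun h => aPoly_ne_zero (K := K) (m := m) ?_)
        · rw [← τi_τ (m := m) w, h, map_zero]
        · rw [← τi_τ (m := m) (aPoly K m), h, map_zero]
      · rw [pow_succ' (Xg K m), pow_succ (Yg K m), mul_assoc, ← mul_assoc (Xg K m ^ k),
          hweq, ← mul_assoc, X_comm, mul_assoc, rel_xy, ← map_mul]

lemma YXpow (k : ℕ) : ∃ w : Polynomial K, w ≠ 0 ∧
    Yg K m ^ k * Xg K m ^ k = aeval (Hg K m) w := by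
  induction k with
  | zero => exact ⟨1, one_ne_zero, by simp⟩
  | succ k ih =>
      obtain ⟨w, hw, hweq⟩ := ih
      refine ⟨τi K m w * aPoly K m, ?_, ?_⟩
      · exact mul_ne_zero (fun h => hw (by rw [← τ_τi (m := m) w, h, map_zero]))
          (aPoly_ne_zero)
      · rw [pow_succ' (Yg K m), pow_succ (Xg K m), mul_assoc, ← mul_assoc (Yg K m ^ k),
          hweq, ← mul_assoc, Y_comm, mul_assoc, rel_yx, ← map_mul]

lemma v_mul_v_neg (n : ℤ) : ∃ w : Polynomial K, w ≠ 0 ∧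
    v K m n * v K m (-n) = aeval (Hg K m) w := by
  by_cases hn : 0 ≤ n
  · obtain ⟨w, hw, hweq⟩ := XYpow (K := K) (m := m) n.toNat
    refine ⟨w, hw, ?_⟩
    rw [v_nonneg hn, v_nonpos (by omega : -n ≤ 0), neg_neg, hweq]
  · obtain ⟨w, hw, hweq⟩ := YXpow (K := K) (m := m) (-n).toNat
    refine ⟨w, hw, ?_⟩
    rw [v_nonpos (by omega : n ≤ 0), v_nonneg (by omega : (0:ℤ) ≤ -n)]
    rw [show (-n).toNat = (-n).toNat from rfl]
    exact hweq

section Roots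

lemma aPoly_root {F : Type*} [Field F] [CharZero F] {mm : ℕ} (hm : 2 ≤ mm) {α : F}
    (h : eval α (aPoly F mm) = 0) :
    ∃ A : ℤ, α = (A : F) ∧ (A = 1 - (mm : ℤ) ∨ (2 ≤ A ∧ A ≤ (mm : ℤ))) := by
  rw [aPoly, eval_mul] at h
  rcases mul_eq_zero.mp h with h1 | h2
  · refine ⟨1 - (mm : ℤ), ?_, Or.inl rfl⟩
    rw [eval_add, eval_X, eval_C] at h1
    push_cast
    linear_combination h1
  · rw [eval_prod] at h2
    obtain ⟨j, hj, hj0⟩ := Finset.prod_eq_zero_iff.mp h2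
    rw [eval_sub, eval_X, eval_C, sub_eq_zero] at hj0
    rw [Finset.mem_Icc] at hj
    exact ⟨(j : ℤ), by exact_mod_cast hj0, Or.inr (by omega)⟩

/-- no two roots of `aPoly` differ by a positive multiple of `m`. -/
lemma aPoly_root_gap {F : Type*} [Field F] [CharZero F] {mm : ℕ} (hm : 2 ≤ mm) {α β : F}
    (hα : eval α (aPoly F mm) = 0) (hβ : eval β (aPoly F mm) = 0)
    {l : ℤ} (hl : 1 ≤ l) (hdiff : α - β = ((l * mm : ℤ) : F)) : False := by
  obtain ⟨A, rfl, hA⟩ := aPoly_root hm hα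
  obtain ⟨B, rfl, hB⟩ := aPoly_root hm hβ
  have hAB : A - B = l * mm := by exact_mod_cast hdiff
  have hub : A - B < 2 * (mm : ℤ) := by omega
  have hl2 : l < 2 := by
    by_contra hc
    push_neg at hc
    have : 2 * (mm : ℤ) ≤ l * mm := by
      apply mul_le_mul_of_nonneg_right hc (by positivity)
    omega
  have : l = 1 := by omega
  subst this
  omega

end Roots

section KeyUnit
variable [CharZero K]

lemma key_unit (hm : 2 ≤ m) (g : Polynomial K) (hg : g ≠ 0)
    (h1 : g ∣ τi K m g * aPoly K m) (h2 : g ∣ τ K m g * τ K m (aPoly K m)) :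
    IsUnit g := by
  by_contra hunit
  set F := AlgebraicClosure K
  let φ : K →+* F := algebraMap K F
  set G : Polynomial F := g.map φ with hG
  have hG0 : G ≠ 0 := (Polynomial.map_ne_zero_iff φ.injective).mpr hg
  have hGdeg : G.degree ≠ 0 := by
    intro hd
    exact hunit ((Polynomial.isUnit_iff_degree_eq_zero.mpr
      (by rwa [degree_map] at hd)))
  obtain ⟨lam, hlam⟩ := IsAlgClosed.exists_root G hGdeg
  -- mapped data
  have hmapA : (aPoly K m).map φ = aPoly F m := by
    rw [aPoly, aPoly, Polynomial.map_mul, Polynomial.map_add, Polynomial.map_prod]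
    congr 1
    · rw [map_X, map_C, map_sub, map_one, map_natCast]
    · refine Finset.prod_congr rfl fun j _ => ?_
      rw [Polynomial.map_sub, map_X, map_C, map_natCast]
  have hmapτi : (τi K m g).map φ = G.comp (X + C (m : F)) := by
    rw [show τi K m g = g.comp (X + C (m : K)) from rfl, Polynomial.map_comp,
      Polynomial.map_add, map_X, map_C, map_natCast]
  have hmapτ : (τ K m g).map φ = G.comp (X - C (m : F)) := by
    rw [show τ K m g = g.comp (X - C (m : K)) from rfl, Polynomial.map_comp,
      Polynomial.map_sub, map_X, map_C, map_natCast]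
  have hmapτA : (τ K m (aPoly K m)).map φ = (aPoly F m).comp (X - C (m : F)) := by
    rw [show τ K m (aPoly K m) = (aPoly K m).comp (X - C (m : K)) from rfl,
      Polynomial.map_comp, Polynomial.map_sub, map_X, map_C, map_natCast, hmapA]
  have hdvd1 : G ∣ G.comp (X + C (m : F)) * aPoly F m := by
    have := Polynomial.map_dvd φ h1
    rwa [Polynomial.map_mul, hmapτi, hmapA] at this
  have hdvd2 : G ∣ G.comp (X - C (m : F)) * (aPoly F m).comp (X - C (m : F)) := by
    have := Polynomial.map_dvd φ h2
    rwa [Polynomial.map_mul, hmapτ, hmapτA] at this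
  -- the chain of roots
  have hmF : (m : F) ≠ 0 := Nat.cast_ne_zero.mpr (by omega)
  letI : Field F := inferInstanceAs (Field (AlgebraicClosure K))
  set T : Set ℤ := {k : ℤ | eval (lam + (k : F) * (m : F)) G = 0} with hT
  have hT0 : (0 : ℤ) ∈ T := by simpa [hT] using hlam
  have hTfin : T.Finite := by
    have hsub : T ⊆ (fun k : ℤ => lam + (k : F) * (m : F)) ⁻¹' {x | IsRoot G x} := by
      intro k hk
      exact hk
    refine Set.Finite.subset (Set.Finite.preimage ?_ (finite_setOf_isRoot hG0)) hsub
    intro a _ b _ hab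
    have : ((a : F) - b) * m = 0 := by
      push_cast at hab ⊢
      ring_nf
      ring_nf at hab
      linear_combination hab
    rcases mul_eq_zero.mp this with h | h
    · have : (a : F) = b := by linear_combination h
      exact_mod_cast this
    · exact absurd h hmF
  have hTne : hTfin.toFinset.Nonempty := ⟨0, hTfin.mem_toFinset.mpr hT0⟩
  set kp := hTfin.toFinset.max' hTne with hkp
  set kn := hTfin.toFinset.min' hTne with hkn
  have hkpT : kp ∈ T := hTfin.mem_toFinset.mp (hTfin.toFinset.max'_mem hTne)
  have hknT : kn ∈ T := hTfin.mem_toFinset.mp (hTfin.toFinset.min'_mem hTne)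
  have hknkp : kn ≤ kp := hTfin.toFinset.min'_le _ (hTfin.toFinset.max'_mem hTne)
  -- A(lam + kp m) = 0
  have hAroot1 : eval (lam + (kp : F) * m) (aPoly F m) = 0 := by
    obtain ⟨t, ht⟩ := hdvd1
    have hev := congrArg (eval (lam + (kp : F) * m)) ht
    rw [eval_mul, eval_mul, eval_comp, eval_add, eval_X, eval_C, hkpT, zero_mul] at hev
    have hne : eval (lam + (kp : F) * m + m) G ≠ 0 := by
      intro h0
      have : (kp + 1 : ℤ) ∈ T := by
        rw [hT, Set.mem_setOf_eq]
        push_cast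
        convert h0 using 2
        ring
      have := hTfin.toFinset.le_max' _ (hTfin.mem_toFinset.mpr this)
      omega
    rcases mul_eq_zero.mp hev with h | h
    · exact absurd h hne
    · exact h
  -- A(lam + kn m - m) = 0
  have hAroot2 : eval (lam + (kn : F) * m - m) (aPoly F m) = 0 := by
    obtain ⟨t, ht⟩ := hdvd2
    have hev := congrArg (eval (lam + (kn : F) * m)) ht
    rw [eval_mul, eval_mul, eval_comp, eval_comp, eval_sub, eval_X, eval_C, hknT,
      zero_mul] at hev
    have hne : eval (lam + (kn : F) * m - m) G ≠ 0 := by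
      intro h0
      have : (kn - 1 : ℤ) ∈ T := by
        rw [hT, Set.mem_setOf_eq]
        push_cast
        convert h0 using 2
        ring
      have := hTfin.toFinset.min'_le _ (hTfin.mem_toFinset.mpr this)
      omega
    rcases mul_eq_zero.mp hev with h | h
    · exact absurd h hne
    · exact h
  refine aPoly_root_gap hm hAroot1 hAroot2 (l := kp - kn + 1) (by omega) ?_
  push_cast
  ring

end KeyUnit

section Final
variable [CharZero K]

lemma exists_mem_ne_zero {I : TwoSidedIdeal (GWA2 K m)} (hI : I ≠ ⊥) :
    ∃ x ∈ I, x ≠ 0 := by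
  by_contra hc
  push_neg at hc
  apply hI
  refine le_antisymm ?_ bot_le
  rw [TwoSidedIdeal.le_iff]
  intro x hx
  rw [SetLike.mem_coe, TwoSidedIdeal.mem_bot]
  exact hc x hx

lemma exists_poly_in_I (hm : m ≠ 0) (I : TwoSidedIdeal (GWA2 K m)) (hI : I ≠ ⊥) :
    ∃ q : Polynomial K, q ≠ 0 ∧ aeval (Hg K m) q ∈ I := by
  obtain ⟨x, hxI, hx0⟩ := exists_mem_ne_zero hI
  obtain ⟨n, p, hp0, hbI⟩ :=
    extract_homogeneous hm I (Φ K m x).support.card x hxI hx0 le_rfl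
  obtain ⟨w, hw0, hweq⟩ := v_mul_v_neg (K := K) (m := m) n
  refine ⟨p * w, mul_ne_zero hp0 hw0, ?_⟩
  have h : (aeval (Hg K m) p * v K m n) * v K m (-n) ∈ I := I.mul_mem_right _ _ hbI
  rwa [mul_assoc, hweq, ← map_mul] at h

lemma I_eq_top (hm : 2 ≤ m) (I : TwoSidedIdeal (GWA2 K m)) (hI : I ≠ ⊥) : I = ⊤ := by
  obtain ⟨q, hq0, hqI⟩ := exists_poly_in_I (by omega) I hI
  set J : Ideal (Polynomial K) :=
    { carrier := {r : Polynomial K | aeval (Hg K m) r ∈ I}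
      add_mem' := fun ha hb => by
        simp only [Set.mem_setOf_eq, map_add] at *
        exact I.add_mem ha hb
      zero_mem' := by
        simp only [Set.mem_setOf_eq, map_zero]
        exact I.zero_mem
      smul_mem' := fun c x hx => by
        simp only [Set.mem_setOf_eq, smul_eq_mul, map_mul] at *
        exact I.mul_mem_left _ _ hx } with hJdef
  have hmemJ : ∀ r : Polynomial K, r ∈ J ↔ aeval (Hg K m) r ∈ I := fun r => Iff.rfl
  obtain ⟨g, hgspan⟩ := (IsPrincipalIdealRing.principal J).principal
  have hdvd_of_mem : ∀ r ∈ J, g ∣ r := by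
    intro r hr
    rw [hgspan] at hr
    exact Ideal.mem_span_singleton.mp hr
  have hgJ : g ∈ J := by
    rw [hgspan]
    exact Ideal.mem_span_singleton.mpr dvd_rfl
  have hgI : aeval (Hg K m) g ∈ I := (hmemJ g).mp hgJ
  have hg0 : g ≠ 0 := by
    intro h0
    apply hq0
    have := hdvd_of_mem q ((hmemJ q).mpr hqI)
    rwa [h0, zero_dvd_iff] at this
  have hclose1 : τi K m g * aPoly K m ∈ J := by
    rw [hmemJ]
    have h : Yg K m * aeval (Hg K m) g * Xg K m ∈ I :=
      I.mul_mem_right _ _ (I.mul_mem_left _ _ hgI)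
    rwa [Y_comm, mul_assoc, rel_yx, ← map_mul] at h
  have hclose2 : τ K m g * τ K m (aPoly K m) ∈ J := by
    rw [hmemJ]
    have h : Xg K m * aeval (Hg K m) g * Yg K m ∈ I :=
      I.mul_mem_right _ _ (I.mul_mem_left _ _ hgI)
    rwa [X_comm, mul_assoc, rel_xy, ← map_mul] at h
  have hunit : IsUnit g :=
    key_unit hm g hg0 (hdvd_of_mem _ hclose1) (hdvd_of_mem _ hclose2)
  have h1J : (1 : Polynomial K) ∈ J := by
    rw [hgspan]
    rw [show Submodule.span (Polynomial K) {g} = Ideal.span {g} from rfl,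
      Ideal.span_singleton_eq_top.mpr hunit]
    trivial
  have h1I : (1 : GWA2 K m) ∈ I := by
    have := (hmemJ 1).mp h1J
    rwa [map_one] at this
  exact TwoSidedIdeal.eq_top _ h1I

lemma simple (hm : 2 ≤ m) : IsSimpleRing (GWA2 K m) := by
  constructor
  have hbotne : (⊥ : TwoSidedIdeal (GWA2 K m)) ≠ ⊤ := by
    intro h
    have h1 : (1 : GWA2 K m) ∈ (⊥ : TwoSidedIdeal (GWA2 K m)) := by
      rw [h]
      exact TwoSidedIdeal.mem_top _
    rw [TwoSidedIdeal.mem_bot] at h1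
    exact one_ne_zero h1
  haveI : Nontrivial (TwoSidedIdeal (GWA2 K m)) := ⟨⊥, ⊤, hbotne⟩
  constructor
  intro I
  by_cases hI : I = ⊥
  · exact Or.inl hI
  · exact Or.inr (I_eq_top hm I hI)

end Final

end GWAaux

/-- the generalized Weyl algebra
`𝒜 = K[h][X,Y;σ^m, (h+m-1)(h-2)⋯(h-m)]` is a simple ring. -/
theorem stmt8 (K : Type*) [Field K] [CharZero K] (m : ℕ) (hm : 2 ≤ m) :
    IsSimpleRing (GWA2 K m) := by
  exact GWAaux.simple hm
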